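/- For α > 0, the function ū(x) defined piecewise as ((u_R−u_L)/2) exp((x−s)/α) + u_L for x < s and ((u_L−u_R)/2) exp(−(x−s)/α) + u_R for x ≥ s equals the convolution g^α ∗ u of the Helmholtz kernel with the step function u(x) = u_L for x < s, u_R for x ≥ s. -/

import Mathlib

open MeasureTheory Real Set Filter intervalIntegral

lemma expAff_cont (α c : ℝ) : Continuous (fun y : ℝ => Real.exp ((y - c)/α)) := by
  continuity

lemma expAff_interval (α c a b : ℝ) (hα : 0 < α) :
    ∫ y in a..b, Real.exp ((y - c)/α)
      = α * Real.exp ((b-c)/α) - α * Real.exp ((a-c)/α) := by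
  have h : ∀ y ∈ Set.uIcc a b, HasDerivAt (fun z => α * Real.exp ((z - c)/α))
      (Real.exp ((y-c)/α)) y := by
    intro y _
    have := ((((hasDerivAt_id y).sub_const c).div_const α).exp.const_mul α)
    refine this.congr_deriv ?_
    field_simp [id]
    rfl
  rw [intervalIntegral.integral_eq_sub_of_hasDerivAt h ((expAff_cont α c).intervalIntegrable a b)]

lemma expAff_integrableOn_Iic (α c t : ℝ) (hα : 0 < α) :
    IntegrableOn (fun y => Real.exp ((y - c)/α)) (Iic t) := by
  refine integrableOn_Iic_of_intervalIntegral_norm_bounded (α * Real.exp ((t-c)/α)) t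
    (fun i => ((expAff_cont α c).intervalIntegrable _ _).1) tendsto_id
    (Eventually.of_forall fun i => ?_)
  simp only [id_eq, Real.norm_of_nonneg (Real.exp_pos _).le]
  rw [expAff_interval α c i t hα]
  nlinarith [Real.exp_pos ((i-c)/α), hα]

lemma expAff_integral_Iic (α c t : ℝ) (hα : 0 < α) :
    ∫ y in Iic t, Real.exp ((y - c)/α) = α * Real.exp ((t-c)/α) := by
  refine tendsto_nhds_unique
    (intervalIntegral_tendsto_integral_Iic _ (expAff_integrableOn_Iic α c t hα) tendsto_id) ?_
  simp_rw [expAff_interval α c _ t hα]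
  have : Tendsto (fun i : ℝ => α * Real.exp ((i-c)/α)) atBot (nhds 0) := by
    rw [show (0:ℝ) = α * 0 by ring]
    refine Tendsto.const_mul α (Real.tendsto_exp_atBot.comp ?_)
    exact ((tendsto_atBot_add_const_right _ (-c) tendsto_id).atBot_div_const hα).congr
      fun i => by simp [id]; ring
  simpa using (tendsto_const_nhds.sub this)

lemma expAff_cont' (α c : ℝ) : Continuous (fun y : ℝ => Real.exp ((c - y)/α)) := by
  continuity

lemma expAff_interval' (α c a b : ℝ) (hα : 0 < α) :
    ∫ y in a..b, Real.exp ((c - y)/α)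
      = α * Real.exp ((c-a)/α) - α * Real.exp ((c-b)/α) := by
  have h : ∀ y ∈ Set.uIcc a b, HasDerivAt (fun z => -(α * Real.exp ((c - z)/α)))
      (Real.exp ((c-y)/α)) y := by
    intro y _
    have := (((((hasDerivAt_id y).const_sub c).div_const α).exp.const_mul α)).neg
    refine this.congr_deriv ?_
    field_simp [id]
    rfl
  rw [intervalIntegral.integral_eq_sub_of_hasDerivAt h ((expAff_cont' α c).intervalIntegrable a b)]
  ring

lemma expAff_integrableOn_Ioi (α c t : ℝ) (hα : 0 < α) :
    IntegrableOn (fun y => Real.exp ((c - y)/α)) (Ioi t) := by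
  refine integrableOn_Ioi_of_intervalIntegral_norm_bounded (α * Real.exp ((c-t)/α)) t
    (fun i => ((expAff_cont' α c).intervalIntegrable _ _).1) tendsto_id
    (Eventually.of_forall fun i => ?_)
  simp only [id_eq, Real.norm_of_nonneg (Real.exp_pos _).le]
  rw [expAff_interval' α c t i hα]
  nlinarith [Real.exp_pos ((c-i)/α), hα]

lemma expAff_integral_Ioi (α c t : ℝ) (hα : 0 < α) :
    ∫ y in Ioi t, Real.exp ((c - y)/α) = α * Real.exp ((c-t)/α) := by
  refine tendsto_nhds_unique
    (intervalIntegral_tendsto_integral_Ioi _ (expAff_integrableOn_Ioi α c t hα) tendsto_id) ?_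
  simp_rw [expAff_interval' α c t _ hα]
  have : Tendsto (fun i : ℝ => α * Real.exp ((c-i)/α)) atTop (nhds 0) := by
    rw [show (0:ℝ) = α * 0 by ring]
    refine Tendsto.const_mul α (Real.tendsto_exp_atBot.comp ?_)
    exact ((tendsto_atBot_add_const_right _ c tendsto_neg_atTop_atBot).atBot_div_const hα).congr
      fun i => by ring
  simpa using (tendsto_const_nhds.sub this)

/-- The Helmholtz filter of a step function is the explicit
piecewise-exponential profile. -/
theorem stmt4 (α s u_L u_R : ℝ) (hα : 0 < α) :
    ∀ x : ℝ,
      (if x < s then (u_R - u_L) / 2 * Real.exp ((x - s) / α) + u_L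
       else (u_L - u_R) / 2 * Real.exp (-(x - s) / α) + u_R)
      = ∫ y : ℝ, Real.exp (-|x - y| / α) / (2 * α) *
          (if y < s then u_L else u_R) := by
  intro x
  have h2α : (2*α) ≠ 0 := by positivity
  set k : ℝ → ℝ := fun y => Real.exp (-|x - y| / α) with hk
  set f : ℝ → ℝ := fun y => k y / (2 * α) * (if y < s then u_L else u_R) with hf
  have hkc : Continuous k := Real.continuous_exp.comp (by continuity)
  -- k agrees with exponentials on half lines
  have hkL : ∀ t, t ≤ x → EqOn k (fun y => Real.exp ((y - x)/α)) (Iic t) := by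
    intro t ht y hy
    simp only [hk]
    rw [abs_of_nonneg (by simp only [mem_Iic] at hy; linarith), neg_sub]
  have hkR : ∀ t, x ≤ t → EqOn k (fun y => Real.exp ((x - y)/α)) (Ici t) := by
    intro t ht y hy
    simp only [hk]
    rw [abs_of_nonpos (by simp only [mem_Ici] at hy; linarith), neg_neg]
  have hkint : Integrable k := by
    rw [← integrableOn_univ, ← Set.Iic_union_Ioi (a := x)]
    refine IntegrableOn.union ?_ ?_
    · exact (expAff_integrableOn_Iic α x x hα).congr_fun
        (fun y hy => ((hkL x le_rfl) hy).symm) measurableSet_Iic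
    · exact (expAff_integrableOn_Ioi α x x hα).congr_fun
        (fun y hy => ((hkR x le_rfl) (mem_Ici.mpr (le_of_lt hy))).symm) measurableSet_Ioi
  have hfint : Integrable f := by
    have hstep : Integrable (fun y => k y / (2*α)) := hkint.div_const _
    have : Integrable (fun y => |k y / (2*α)| * max |u_L| |u_R|) :=
      (hstep.abs.mul_const _)
    refine this.mono' ?_ (Eventually.of_forall fun y => ?_)
    · exact ((hkc.measurable.div_const _).mul
        ((measurable_const.piecewise measurableSet_Iio measurable_const :
          Measurable (fun y => if y < s then u_L else u_R)))).aestronglyMeasurable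
    · simp only [hf, Real.norm_eq_abs, abs_mul]
      refine mul_le_mul_of_nonneg_left ?_ (abs_nonneg _)
      split
      · exact le_max_left _ _
      · exact le_max_right _ _
  have hsplit := integral_Iio_add_Ici (b := s) hfint.integrableOn hfint.integrableOn
  rw [← hsplit]
  -- left piece
  have hIio : ∫ y in Iio s, f y = (∫ y in Iio s, k y) / (2*α) * u_L := by
    rw [setIntegral_congr_fun measurableSet_Iio
      (fun y hy => by simp only [hf]; rw [if_pos (mem_Iio.mp hy)]),
      MeasureTheory.integral_mul_const, MeasureTheory.integral_div]
  have hIci : ∫ y in Ici s, f y = (∫ y in Ici s, k y) / (2*α) * u_R := by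
    rw [setIntegral_congr_fun measurableSet_Ici
      (fun y hy => by simp only [hf]; rw [if_neg (not_lt.2 (mem_Ici.mp hy))]),
      MeasureTheory.integral_mul_const, MeasureTheory.integral_div]
  rw [hIio, hIci]
  rcases lt_or_ge x s with hx | hx
  · -- x < s
    have hL : ∫ y in Iio s, k y = 2*α - α * Real.exp ((x - s)/α) := by
      rw [← Set.Iic_union_Ioo_eq_Iio hx,
        setIntegral_union (by exact (Set.Iic_disjoint_Ioi le_rfl).mono_right Set.Ioo_subset_Ioi_self)
          measurableSet_Ioo hkint.integrableOn hkint.integrableOn,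
        setIntegral_congr_fun measurableSet_Iic (hkL x le_rfl),
        expAff_integral_Iic α x x hα,
        setIntegral_congr_fun measurableSet_Ioo
          (fun y hy => (hkR x le_rfl) (mem_Ici.mpr (le_of_lt hy.1))),
        setIntegral_congr_set Ioo_ae_eq_Ioc,
        ← intervalIntegral.integral_of_le hx.le,
        expAff_interval' α x x s hα]
      simp only [sub_self, zero_div, Real.exp_zero]
      ring
    have hR : ∫ y in Ici s, k y = α * Real.exp ((x - s)/α) := by
      rw [setIntegral_congr_fun measurableSet_Ici (hkR s hx.le),
        ← setIntegral_congr_set Ioi_ae_eq_Ici,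
        expAff_integral_Ioi α x s hα]
    rw [hL, hR, if_pos hx]
    field_simp
    ring
  · -- s ≤ x
    have hL : ∫ y in Iio s, k y = α * Real.exp ((s - x)/α) := by
      rw [setIntegral_congr_set Iio_ae_eq_Iic,
        setIntegral_congr_fun measurableSet_Iic (hkL s hx),
        expAff_integral_Iic α x s hα]
    have hR : ∫ y in Ici s, k y = 2*α - α * Real.exp ((s - x)/α) := by
      rw [← Set.Icc_union_Ioi_eq_Ici hx,
        setIntegral_union ((Set.Iic_disjoint_Ioi le_rfl).mono_left Set.Icc_subset_Iic_self)
          measurableSet_Ioi hkint.integrableOn hkint.integrableOn,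
        ← setIntegral_congr_set Ioc_ae_eq_Icc,
        setIntegral_congr_fun measurableSet_Ioc
          (fun y hy => (hkL x le_rfl) (mem_Iic.mpr hy.2)),
        ← intervalIntegral.integral_of_le hx,
        expAff_interval α x s x hα,
        setIntegral_congr_fun measurableSet_Ioi
          (fun y hy => (hkR x le_rfl) (mem_Ici.mpr (le_of_lt hy))),
        show (∫ y in Ioi x, Real.exp ((x - y)/α)) = _ from expAff_integral_Ioi α x x hα]
      simp only [sub_self, zero_div, Real.exp_zero]
      ring
    rw [hL, hR, if_neg (not_lt.2 hx), neg_sub]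
    field_simp
    ring
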